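/- Let a,b be real numbers and define X(x,y,z) = (ax+by+xz, -bx+ay+yz, -2az - x^2 - y^2 - z^2) and Δ(x,y,z) = (y, -x, 0). Then for all (x,y,z) ∈ ℝ³, (DΔ)(x,y,z) · X(x,y,z) - (DX)(x,y,z) · Δ(x,y,z) = 0. -/

import Mathlib

theorem stmt1 (a b : ℝ)
    (X Δ : ℝ × ℝ × ℝ → ℝ × ℝ × ℝ)
    (hX : X = fun p => (a*p.1 + b*p.2.1 + p.1*p.2.2,
                        -b*p.1 + a*p.2.1 + p.2.1*p.2.2,
                        -2*a*p.2.2 - p.1^2 - p.2.1^2 - p.2.2^2))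
    (hΔ : Δ = fun p => (p.2.1, -p.1, 0)) :
    ∀ p : ℝ × ℝ × ℝ, fderiv ℝ Δ p (X p) - fderiv ℝ X p (Δ p) = 0 := by
  subst hX hΔ
  intro p
  have h1 : HasFDerivAt (fun q : ℝ × ℝ × ℝ => q.1)
      (ContinuousLinearMap.fst ℝ ℝ (ℝ × ℝ)) p := hasFDerivAt_fst
  have h2 : HasFDerivAt (fun q : ℝ × ℝ × ℝ => q.2.1)
      ((ContinuousLinearMap.fst ℝ ℝ ℝ).comp (ContinuousLinearMap.snd ℝ ℝ (ℝ × ℝ))) p :=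
    hasFDerivAt_fst.comp p hasFDerivAt_snd
  have h3 : HasFDerivAt (fun q : ℝ × ℝ × ℝ => q.2.2)
      ((ContinuousLinearMap.snd ℝ ℝ ℝ).comp (ContinuousLinearMap.snd ℝ ℝ (ℝ × ℝ))) p :=
    hasFDerivAt_snd.comp p hasFDerivAt_snd
  have hf1 := ((h1.const_mul a).add (h2.const_mul b)).add (h1.mul h3)
  have hf2 := ((h1.const_mul (-b)).add (h2.const_mul a)).add (h2.mul h3)
  have hf3 := (((h3.const_mul (-2*a)).sub (h1.mul h1)).sub (h2.mul h2)).sub (h3.mul h3)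
  have hXd := (HasFDerivAt.prodMk hf1 (HasFDerivAt.prodMk hf2 hf3))
  have hΔd := HasFDerivAt.prodMk h2 (HasFDerivAt.prodMk (h1.neg) (hasFDerivAt_const (0:ℝ) p))
  simp only [pow_two]
  erw [hXd.fderiv, hΔd.fderiv]
  simp only [ContinuousLinearMap.prod_apply, ContinuousLinearMap.add_apply,
    ContinuousLinearMap.sub_apply, ContinuousLinearMap.smul_apply,
    ContinuousLinearMap.comp_apply, ContinuousLinearMap.coe_fst',
    ContinuousLinearMap.coe_snd', ContinuousLinearMap.neg_apply,
    ContinuousLinearMap.coe_smul', Pi.smul_apply, smul_eq_mul,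
    ContinuousLinearMap.zero_apply]
  refine Prod.ext ?_ (Prod.ext ?_ ?_) <;> simp <;> ring
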